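/- Let G be a rectifiable space that is orderable (homeomorphic to a linearly ordered topological space with its order topology). Then there is a local base at the right neutral element e of G that is linearly ordered by inclusion (a totally ordered base of neighborhoods of e). -/

import Mathlib

open Set Cardinal Ordinal OrderDual

section Aux

variable {α : Type*} [TopologicalSpace α] [LinearOrder α] [OrderTopology α]

private lemma getIoo {e : α} {s : Set α} (hs : s ∈ nhds e)
    (hLne : ∃ x, x < e) (hRne : ∃ x, e < x) :
    ∃ l u, l < e ∧ e < u ∧ Ioo l u ⊆ s := by
  obtain ⟨l, hl, h1⟩ := exists_Ioc_subset_of_mem_nhds hs hLne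
  obtain ⟨u, hu, h2⟩ := exists_Ico_subset_of_mem_nhds hs hRne
  refine ⟨l, u, hl, hu, fun x hx => ?_⟩
  rcases le_or_gt x e with h | h
  · exact h1 ⟨hx.1, h⟩
  · exact h2 ⟨h.le, hx.2⟩


private lemma keyM (e : α) (q : α × α → α) (hq : Continuous q)
    (hqe : ∀ x, q (x, x) = e)
    (hqinj : ∀ x y, q (x, y) = e → y = x)
    (hLne : ∃ x, x < e) (hLnomax : ∀ x, x < e → ∃ y, x < y ∧ y < e)
    (hRnomin : ∀ x, e < x → ∃ y, e < y ∧ y < x)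
    (A : Set α) (hA : ∀ a ∈ A, a < e)
    (hAcof : ∀ x, x < e → ∃ a ∈ A, x ≤ a)
    (hsmall : ∀ X : Set α, (∀ s ∈ X, e < s) → #X ≤ #A →
      ∃ x, e < x ∧ ∀ s ∈ X, x < s) : False := by
  have hRne : ∃ x, e < x := by
    obtain ⟨x, hx, -⟩ := hsmall ∅ (by simp) (by simp)
    exact ⟨x, hx⟩
  set A₁ : Set α := {a ∈ A | q (a, e) < e} with hA₁def
  set A₂ : Set α := {a ∈ A | e < q (a, e)} with hA₂def
  have hqae : ∀ a ∈ A, q (a, e) ≠ e := fun a ha h => (hA a ha).ne' (hqinj a e h)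
  -- Step 1: A₂ cannot be cofinal in the left side
  have claim1 : ¬ ∀ x, x < e → ∃ a ∈ A₂, x ≤ a := by
    intro hcof
    have hS₂R : ∀ s ∈ (fun a => q (a, e)) '' A₂, e < s := by
      rintro s ⟨a, ha, rfl⟩; exact ha.2
    have hcard : #((fun a => q (a, e)) '' A₂) ≤ #A :=
      le_trans Cardinal.mk_image_le (Cardinal.mk_le_mk_of_subset fun a ha => ha.1)
    obtain ⟨x₀, hx₀, hbd⟩ := hsmall _ hS₂R hcard
    obtain ⟨l₀, hl₀⟩ := id hLne
    have hc : Continuous fun y => q (y, e) := hq.comp (continuous_id.prodMk continuous_const)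
    have hpre : (fun y => q (y, e)) ⁻¹' (Ioo l₀ x₀) ∈ nhds e := by
      apply hc.continuousAt.preimage_mem_nhds
      rw [hqe e]
      exact Ioo_mem_nhds hl₀ hx₀
    obtain ⟨l, u, hl, hu, hsub⟩ := getIoo hpre hLne hRne
    obtain ⟨y, hly, hye⟩ := hLnomax l hl
    obtain ⟨a, haA₂, hya⟩ := hcof y hye
    have h1 := hsub ⟨hly.trans_le hya, (hA a haA₂.1).trans hu⟩
    exact absurd (hbd _ ⟨a, haA₂, rfl⟩) (not_lt.2 h1.2.le)
  -- hence A₁ is cofinal in the left side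
  have hA1cof : ∀ x, x < e → ∃ a ∈ A₁, x ≤ a := by
    by_contra hcon
    push_neg at hcon
    obtain ⟨x₁, hx₁e, hbd₁⟩ := hcon
    apply claim1
    intro x hx
    obtain ⟨z, hz1, hz2⟩ := hLnomax (max x x₁) (max_lt hx hx₁e)
    obtain ⟨a, haA, hza⟩ := hAcof z hz2
    have hax : x ≤ a := le_trans (le_max_left _ _) (le_trans hz1.le hza)
    have hax₁ : x₁ < a := lt_of_le_of_lt (le_max_right x x₁) (lt_of_lt_of_le hz1 hza)
    rcases lt_trichotomy (q (a, e)) e with h | h | h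
    · exact absurd (hbd₁ a ⟨haA, h⟩) (not_lt.2 hax₁.le)
    · exact absurd h (hqae a haA)
    · exact ⟨a, ⟨haA, h⟩, hax⟩
  -- Step 2: S = right points pushed right by q (e, ·) is coinitial
  have hqeb : ∀ b, e < b → q (e, b) ≠ e := fun b hb h => hb.ne' (hqinj e b h)
  have hScoi : ∀ x, e < x → ∃ b ∈ {b | e < b ∧ e < q (e, b)}, b ≤ x := by
    by_contra hcon
    push_neg at hcon
    obtain ⟨x₂, hx₂, hbd₂⟩ := hcon
    have hS'coi : ∀ x, e < x → ∃ s ∈ {b | e < b ∧ q (e, b) < e}, s ≤ x := by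
      intro x hx
      have hw : e < min x x₂ := lt_min hx hx₂
      obtain ⟨b, hb1, hb2⟩ := hRnomin _ hw
      rcases lt_trichotomy (q (e, b)) e with h | h | h
      · exact ⟨b, ⟨hb1, h⟩, le_trans hb2.le (min_le_left _ _)⟩
      · exact absurd h (hqeb b hb1)
      · exact absurd (hbd₂ b ⟨hb1, h⟩) (not_lt.2 (le_trans hb2.le (min_le_right _ _)))
    have hcover : ∃ a, a < e ∧ ∀ x, e < x →
        ∃ s ∈ {b | e < b ∧ q (e, b) < e}, s ≤ x ∧ q (e, s) ≤ a := by
      by_contra hno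
      push_neg at hno
      have hno' : ∀ a : ↥A, ∃ x, e < x ∧
          ∀ s ∈ {b | e < b ∧ q (e, b) < e}, s ≤ x → (a : α) < q (e, s) :=
        fun a => hno ↑a (hA ↑a a.2)
      choose xf hxf1 hxf2 using hno'
      obtain ⟨y, hy, hby⟩ := hsmall (Set.range xf)
        (by rintro s ⟨a, rfl⟩; exact hxf1 a) Cardinal.mk_range_le
      obtain ⟨s, hsS', hsy⟩ := hS'coi y hy
      obtain ⟨a, haA, hqa⟩ := hAcof (q (e, s)) hsS'.2
      exact absurd hqa (not_le.2 (hxf2 ⟨a, haA⟩ s hsS' (hsy.trans (hby _ ⟨⟨a, haA⟩, rfl⟩).le)))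
    obtain ⟨a₀, ha₀, hP₀⟩ := hcover
    have hc2 : Continuous fun y => q (e, y) := hq.comp (continuous_const.prodMk continuous_id)
    have hpre : (fun y => q (e, y)) ⁻¹' (Ioi a₀) ∈ nhds e := by
      apply hc2.continuousAt.preimage_mem_nhds
      rw [hqe e]; exact Ioi_mem_nhds ha₀
    obtain ⟨l, u, hl, hu, hsub⟩ := getIoo hpre hLne hRne
    obtain ⟨u', hu'1, hu'2⟩ := hRnomin u hu
    obtain ⟨s, hsS', hsu, hsq⟩ := hP₀ u' hu'1
    have hmem : q (e, s) ∈ Ioi a₀ := hsub ⟨lt_trans hl hsS'.1, lt_of_le_of_lt hsu hu'2⟩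
    exact absurd hsq (not_le.2 hmem)
  -- Step 3: the final contradiction
  have h3 : ∀ a : ↥A₁, ∃ u, e < u ∧ ∀ y, e < y → y < u → q ((a : α), y) < e := by
    intro a
    have hc3 : Continuous fun y => q ((a : α), y) :=
      hq.comp (continuous_const.prodMk continuous_id)
    have hpre : (fun y => q ((a : α), y)) ⁻¹' (Iio e) ∈ nhds e := by
      apply hc3.continuousAt.preimage_mem_nhds
      exact Iio_mem_nhds a.2.2
    obtain ⟨l, u, hl, hu, hsub⟩ := getIoo hpre hLne hRne
    exact ⟨u, hu, fun y h1 h2 => hsub ⟨lt_trans hl h1, h2⟩⟩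
  choose t ht htq using h3
  obtain ⟨x', hx', hbt⟩ := hsmall (Set.range t)
    (by rintro s ⟨a, rfl⟩; exact ht a)
    (le_trans Cardinal.mk_range_le (Cardinal.mk_le_mk_of_subset fun a ha => ha.1))
  obtain ⟨b, hbS, hbx⟩ := hScoi x' hx'
  have hc4 : Continuous fun x => q (x, b) := hq.comp (continuous_id.prodMk continuous_const)
  have hpre : (fun x => q (x, b)) ⁻¹' (Ioi e) ∈ nhds e := by
    apply hc4.continuousAt.preimage_mem_nhds
    exact Ioi_mem_nhds hbS.2
  obtain ⟨l, u, hl, hu, hsub⟩ := getIoo hpre hLne hRne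
  obtain ⟨y, hly, hye⟩ := hLnomax l hl
  obtain ⟨a, haA₁, hya⟩ := hA1cof y hye
  have hmem : q (a, b) ∈ Ioi e := hsub ⟨hly.trans_le hya, (hA a haA₁.1).trans hu⟩
  have h5 : q (a, b) < e := htq ⟨a, haA₁⟩ b hbS.1 (lt_of_le_of_lt hbx (hbt _ ⟨⟨a, haA₁⟩, rfl⟩))
  exact absurd hmem (not_lt.2 h5.le)


set_option linter.unusedSectionVars false

private lemma exists_coinitial_le (e : α) (q : α × α → α) (hq : Continuous q)
    (hqe : ∀ x, q (x, x) = e)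
    (hqinj : ∀ x y, q (x, y) = e → y = x)
    (hLne : ∃ x, x < e) (hLnomax : ∀ x, x < e → ∃ y, x < y ∧ y < e)
    (hRnomin : ∀ x, e < x → ∃ y, e < y ∧ y < x)
    (A : Set α) (hA : ∀ a ∈ A, a < e)
    (hAcof : ∀ x, x < e → ∃ a ∈ A, x ≤ a) :
    ∃ S : Set α, (∀ s ∈ S, e < s) ∧ (∀ x, e < x → ∃ s ∈ S, s ≤ x) ∧ #S ≤ #A := by
  by_contra hcon
  push_neg at hcon
  refine keyM e q hq hqe hqinj hLne hLnomax hRnomin A hA hAcof ?_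
  intro X hX hcard
  by_contra hnb
  push_neg at hnb
  exact absurd hcard (not_le.2 (hcon X hX hnb))

private lemma exists_cofinal_le (e : α) (q : α × α → α) (hq : Continuous q)
    (hqe : ∀ x, q (x, x) = e)
    (hqinj : ∀ x y, q (x, y) = e → y = x)
    (hRne : ∃ x, e < x) (hRnomin : ∀ x, e < x → ∃ y, e < y ∧ y < x)
    (hLnomax : ∀ x, x < e → ∃ y, x < y ∧ y < e)
    (S : Set α) (hS : ∀ s ∈ S, e < s)
    (hScoi : ∀ x, e < x → ∃ s ∈ S, s ≤ x) :
    ∃ A : Set α, (∀ a ∈ A, a < e) ∧ (∀ x, x < e → ∃ a ∈ A, x ≤ a) ∧ #A ≤ #S := by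
  obtain ⟨A', h1, h2, h3⟩ := exists_coinitial_le (α := αᵒᵈ) (toDual e)
      (fun p => toDual (q (ofDual p.1, ofDual p.2)))
      (continuous_toDual.comp (hq.comp ((continuous_ofDual.comp continuous_fst).prodMk
        (continuous_ofDual.comp continuous_snd))))
      (fun x => congrArg toDual (hqe (ofDual x)))
      (fun x y h => hqinj (ofDual x) (ofDual y) (toDual.injective h))
      (by obtain ⟨x, hx⟩ := hRne; exact ⟨toDual x, hx⟩)
      (by intro x hx
          obtain ⟨y, hy1, hy2⟩ := hRnomin (ofDual x) hx
          exact ⟨toDual y, hy2, hy1⟩)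
      (by intro x hx
          obtain ⟨y, hy1, hy2⟩ := hLnomax (ofDual x) hx
          exact ⟨toDual y, hy2, hy1⟩)
      (ofDual ⁻¹' S)
      (fun a ha => hS (ofDual a) ha)
      (by intro x hx
          obtain ⟨s, hs1, hs2⟩ := hScoi (ofDual x) hx
          exact ⟨toDual s, hs1, hs2⟩)
  refine ⟨toDual ⁻¹' A', ?_, ?_, ?_⟩
  · intro a ha
    exact h1 (toDual a) ha
  · intro x hx
    obtain ⟨s, hs1, hs2⟩ := h2 (toDual x) hx
    exact ⟨ofDual s, hs1, hs2⟩
  · calc #(toDual ⁻¹' A') = #A' := by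
          apply Cardinal.mk_preimage_of_injective_of_subset_range _ _ toDual.injective
          simp [Set.range_eq_univ.2 toDual.surjective]
      _ ≤ #(ofDual ⁻¹' S) := h3
      _ = #S := by
          apply Cardinal.mk_preimage_of_injective_of_subset_range _ _ ofDual.injective
          simp [Set.range_eq_univ.2 ofDual.surjective]


end Aux

private lemma exists_enum {β : Type*} [LinearOrder β] (e : β) (A : Set β)
    (hA : ∀ a ∈ A, a < e) (hAcof : ∀ x, x < e → ∃ a ∈ A, x ≤ a)
    (hLne : ∃ x, x < e) (hLnomax : ∀ x, x < e → ∃ y, x < y ∧ y < e)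
    (hmin : ∀ B : Set β, (∀ b ∈ B, b < e) → (∀ x, x < e → ∃ b ∈ B, x ≤ b) → #A ≤ #B) :
    ∃ (r : ↥A → ↥A → Prop) (_ : IsWellOrder ↥A r) (g : ↥A → β),
      Ordinal.type r = (#↥A).ord ∧ (∀ a, g a < e) ∧
      (∀ a b, r a b → g a < g b) ∧ ∀ x, x < e → ∃ a, x ≤ g a := by
  classical
  have hinf : ℵ₀ ≤ #A := by
    by_contra hfin
    push_neg at hfin
    have hfin' : A.Finite := Cardinal.lt_aleph0_iff_set_finite.mp hfin
    have hne : A.Nonempty := by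
      obtain ⟨x, hx⟩ := hLne
      obtain ⟨a, ha, -⟩ := hAcof x hx
      exact ⟨a, ha⟩
    obtain ⟨a, haA, hmax⟩ : ∃ a ∈ A, ∀ a' ∈ A, id a ≤ id a' → id a = id a' := by
      obtain ⟨a, ha⟩ := Set.Finite.exists_maximal hfin' hne
      exact ⟨a, ha.1, fun a' ha' h => le_antisymm h (ha.2 ha' h)⟩
    obtain ⟨y, hy1, hy2⟩ := hLnomax a (hA a haA)
    obtain ⟨a', ha', hya'⟩ := hAcof y hy2
    have heq : a = a' := hmax a' ha' (le_trans hy1.le hya')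
    rw [heq] at hy1
    exact absurd hya' (not_le.2 hy1)
  obtain ⟨r, wo, hr⟩ := Cardinal.ord_eq ↥A
  haveI := wo
  have key : ∀ (a : ↥A) (ih : ∀ b : ↥A, r b a → {x : β // x < e}),
      ∃ x : β, x < e ∧ (a : β) ≤ x ∧ ∀ (b : ↥A) (hb : r b a), (ih b hb : β) < x := by
    intro a ih
    set Y : Set β := (Set.range fun p : {b : ↥A // r b a} => (ih p.1 p.2 : β)) ∪ {(a : β)}
      with hYdef
    have hYsub : ∀ y ∈ Y, y < e := by
      intro y hy
      rcases hy with ⟨p, rfl⟩ | hy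
      · exact (ih p.1 p.2).2
      · rcases hy with rfl
        exact hA a a.2
    have hYcard : #Y < #A := by
      have h1 : #{b : ↥A // r b a} < #↥A := by
        exact Cardinal.card_typein_lt (r := r) a hr
      calc #Y ≤ _ + _ := Cardinal.mk_union_le _ _
        _ ≤ #{b : ↥A // r b a} + 1 := by
            gcongr
            · exact Cardinal.mk_range_le
            · exact le_of_eq (Cardinal.mk_singleton _)
        _ < #↥A := Cardinal.add_lt_of_lt hinf h1
            (lt_of_lt_of_le Cardinal.one_lt_aleph0 hinf)
    have hnc : ¬ ∀ x, x < e → ∃ y ∈ Y, x ≤ y := fun hc =>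
      absurd (hmin Y hYsub hc) (not_le.2 hYcard)
    push_neg at hnc
    obtain ⟨x, hx, hbd⟩ := hnc
    exact ⟨x, hx, (hbd _ (Or.inr rfl)).le, fun b hb => hbd _ (Or.inl ⟨⟨b, hb⟩, rfl⟩)⟩
  have wf : WellFounded r := wo.wf
  let F : ∀ a : ↥A, (∀ b : ↥A, r b a → {x : β // x < e}) → {x : β // x < e} :=
    fun a ih => ⟨(key a ih).choose, (key a ih).choose_spec.1⟩
  let g' : ↥A → {x : β // x < e} := wf.fix F
  have hfix : ∀ a, g' a = F a fun b _ => g' b := fun a => wf.fix_eq F a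
  refine ⟨r, wo, fun a => (g' a : β), hr.symm, fun a => (g' a).2, ?_, ?_⟩
  · intro a b hab
    have h := (key b fun c _ => g' c).choose_spec.2.2 a hab
    show (g' a : β) < (g' b : β)
    rw [hfix b]
    exact h
  · intro x hx
    obtain ⟨a, ha, hxa⟩ := hAcof x hx
    refine ⟨⟨a, ha⟩, le_trans hxa ?_⟩
    have h := (key ⟨a, ha⟩ fun c _ => g' c).choose_spec.2.1
    show ((⟨a, ha⟩ : ↥A) : β) ≤ (g' ⟨a, ha⟩ : β)
    rw [hfix ⟨a, ha⟩]
    exact h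

open OrderDual in
private lemma exists_enum' {β : Type*} [LinearOrder β] (e : β) (S : Set β)
    (hS : ∀ s ∈ S, e < s) (hScoi : ∀ x, e < x → ∃ s ∈ S, s ≤ x)
    (hRne : ∃ x, e < x) (hRnomin : ∀ x, e < x → ∃ y, e < y ∧ y < x)
    (hmin : ∀ B : Set β, (∀ b ∈ B, e < b) → (∀ x, e < x → ∃ b ∈ B, b ≤ x) → #S ≤ #B) :
    ∃ (r : ↥S → ↥S → Prop) (_ : IsWellOrder ↥S r) (g : ↥S → β),
      Ordinal.type r = (#↥S).ord ∧ (∀ a, e < g a) ∧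
      (∀ a b, r a b → g b < g a) ∧ ∀ x, e < x → ∃ a, g a ≤ x := by
  obtain ⟨r, wo, g, ht, h1, h2, h3⟩ := exists_enum (β := βᵒᵈ) (toDual e) (ofDual ⁻¹' S)
      (fun a ha => hS (ofDual a) ha)
      (by intro x hx
          obtain ⟨s, hs1, hs2⟩ := hScoi (ofDual x) hx
          exact ⟨toDual s, hs1, hs2⟩)
      (by obtain ⟨x, hx⟩ := hRne; exact ⟨toDual x, hx⟩)
      (by intro x hx
          obtain ⟨y, hy1, hy2⟩ := hRnomin (ofDual x) hx
          exact ⟨toDual y, hy2, hy1⟩)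
      (by intro B hB hBcoi
          have h := hmin (toDual ⁻¹' B) (fun b hb => hB (toDual b) hb)
            (by intro x hx
                obtain ⟨b, hb1, hb2⟩ := hBcoi (toDual x) hx
                exact ⟨ofDual b, hb1, hb2⟩)
          calc #(ofDual ⁻¹' S) = #S := Cardinal.mk_preimage_of_injective_of_subset_range _ _
                ofDual.injective (by simp [Set.range_eq_univ.2 ofDual.surjective])
            _ ≤ #(toDual ⁻¹' B) := h
            _ = #B := Cardinal.mk_preimage_of_injective_of_subset_range _ _
                toDual.injective (by simp [Set.range_eq_univ.2 toDual.surjective]))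
  exact ⟨r, wo, g, ht, h1, h2, h3⟩


/-- In an orderable rectifiable space `G` there is a local base at the right
neutral element `e` which is linearly ordered by inclusion. -/
theorem rectifiable_orderable_totally_ordered_base
    {G : Type*} [TopologicalSpace G] [LinearOrder G] [OrderTopology G]
    (e : G) (p q : G × G → G)
    (hp : Continuous p) (hq : Continuous q)
    (hpq : ∀ x y : G, p (x, q (x, y)) = y)
    (hqp : ∀ x y : G, q (x, p (x, y)) = y)
    (hqe : ∀ x : G, q (x, x) = e) :
    ∃ B : Set (Set G), (∀ U ∈ B, IsOpen U ∧ e ∈ U) ∧ IsChain (· ⊆ ·) B ∧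
      (∀ U : Set G, IsOpen U → e ∈ U → ∃ V ∈ B, V ⊆ U) := by
  classical
  have hqinjx : ∀ x : G, Function.Injective fun y => q (x, y) := by
    intro x y₁ y₂ hh
    have h2 := congrArg (fun z => p (x, z)) hh
    simpa [hpq] using h2
  have hpe : ∀ x : G, p (x, e) = x := by
    intro x
    apply hqinjx x
    show q (x, p (x, e)) = q (x, x)
    rw [hqp, hqe]
  have hqinj : ∀ x y : G, q (x, y) = e → y = x := by
    intro x y hh
    have h1 : p (x, q (x, y)) = p (x, e) := by rw [hh]
    rwa [hpq, hpe] at h1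
  by_cases hTL : ∃ W : Set G, IsOpen W ∧ e ∈ W ∧ ∀ x ∈ W, e ≤ x
  · by_cases hTR : ∃ W : Set G, IsOpen W ∧ e ∈ W ∧ ∀ x ∈ W, x ≤ e
    · -- both sides trivial
      obtain ⟨Wl, hWl, heWl, hWlp⟩ := hTL
      obtain ⟨Wr, hWr, heWr, hWrp⟩ := hTR
      refine ⟨{Wl ∩ Wr}, ?_, ?_, ?_⟩
      · intro U hU
        rcases hU with rfl
        exact ⟨hWl.inter hWr, heWl, heWr⟩
      · intro x hx y hy hxy
        rcases hx with rfl; rcases hy with rfl; exact absurd rfl hxy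
      · intro U hU heU
        refine ⟨Wl ∩ Wr, rfl, fun x hx => ?_⟩
        have hx' : x = e := le_antisymm (hWrp x hx.2) (hWlp x hx.1)
        rwa [hx']
    · -- left trivial, right nontrivial
      obtain ⟨Wl, hWl, heWl, hWlp⟩ := hTL
      have hRne : ∃ x, e < x := by
        by_contra hno; push_neg at hno
        exact hTR ⟨univ, isOpen_univ, mem_univ e, fun x _ => hno x⟩
      refine ⟨(fun b => Wl ∩ Iio b) '' Ioi e, ?_, ?_, ?_⟩
      · rintro U ⟨b, hb, rfl⟩
        exact ⟨hWl.inter isOpen_Iio, heWl, hb⟩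
      · rintro U ⟨b, hb, rfl⟩ V ⟨b', hb', rfl⟩ hne
        rcases le_total b b' with hle | hle
        · exact Or.inl (inter_subset_inter_right _ (Iio_subset_Iio hle))
        · exact Or.inr (inter_subset_inter_right _ (Iio_subset_Iio hle))
      · intro U hU heU
        have hmem : U ∩ Wl ∈ nhds e := Filter.inter_mem (hU.mem_nhds heU) (hWl.mem_nhds heWl)
        obtain ⟨u, hu, hsub⟩ := exists_Ico_subset_of_mem_nhds hmem hRne
        exact ⟨Wl ∩ Iio u, ⟨u, hu, rfl⟩, fun x hx => (hsub ⟨hWlp x hx.1, hx.2⟩).1⟩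
  · -- left nontrivial
    have hLne : ∃ x, x < e := by
      by_contra hno; push_neg at hno
      exact hTL ⟨univ, isOpen_univ, mem_univ e, fun x _ => hno x⟩
    have hLnomax : ∀ x, x < e → ∃ y, x < y ∧ y < e := by
      intro x hx
      by_contra hno; push_neg at hno
      exact hTL ⟨Ioi x, isOpen_Ioi, hx, fun z hz => hno z hz⟩
    by_cases hTR : ∃ W : Set G, IsOpen W ∧ e ∈ W ∧ ∀ x ∈ W, x ≤ e
    · -- right trivial, left nontrivial
      obtain ⟨Wr, hWr, heWr, hWrp⟩ := hTR
      refine ⟨(fun a => Ioi a ∩ Wr) '' Iio e, ?_, ?_, ?_⟩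
      · rintro U ⟨a, ha, rfl⟩
        exact ⟨isOpen_Ioi.inter hWr, ha, heWr⟩
      · rintro U ⟨a, ha, rfl⟩ V ⟨a', ha', rfl⟩ hne
        rcases le_total a a' with hle | hle
        · exact Or.inr (inter_subset_inter_left _ (Ioi_subset_Ioi hle))
        · exact Or.inl (inter_subset_inter_left _ (Ioi_subset_Ioi hle))
      · intro U hU heU
        have hmem : U ∩ Wr ∈ nhds e := Filter.inter_mem (hU.mem_nhds heU) (hWr.mem_nhds heWr)
        obtain ⟨l, hl, hsub⟩ := exists_Ioc_subset_of_mem_nhds hmem hLne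
        exact ⟨Ioi l ∩ Wr, ⟨l, hl, rfl⟩, fun x hx => (hsub ⟨hx.1, hWrp x hx.2⟩).1⟩
    · -- main case : both sides nontrivial
      have hRne : ∃ x, e < x := by
        by_contra hno; push_neg at hno
        exact hTR ⟨univ, isOpen_univ, mem_univ e, fun x _ => hno x⟩
      have hRnomin : ∀ x, e < x → ∃ y, e < y ∧ y < x := by
        intro x hx
        by_contra hno; push_neg at hno
        refine hTR ⟨Iio x, isOpen_Iio, hx, fun z hz => ?_⟩
        by_contra hez
        push_neg at hez
        exact absurd hz (not_lt.2 (hno z hez))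
      obtain ⟨κ, hκmem, hκmin⟩ := Cardinal.lt_wf.has_min
        {c | ∃ B : Set G, (∀ b ∈ B, b < e) ∧ (∀ x, x < e → ∃ b ∈ B, x ≤ b) ∧ #B = c}
        ⟨#(Iio e), Iio e, fun a ha => ha, fun x hx => ⟨x, hx, le_rfl⟩, rfl⟩
      obtain ⟨A, hA, hAcof, hAcard⟩ := hκmem
      have hminA : ∀ B : Set G, (∀ b ∈ B, b < e) → (∀ x, x < e → ∃ b ∈ B, x ≤ b) →
          #A ≤ #B := by
        intro B h1 h2
        rw [hAcard]
        exact not_lt.1 (hκmin (#B) ⟨B, h1, h2, rfl⟩)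
      obtain ⟨μ, hμmem, hμmin⟩ := Cardinal.lt_wf.has_min
        {c | ∃ B : Set G, (∀ b ∈ B, e < b) ∧ (∀ x, e < x → ∃ b ∈ B, b ≤ x) ∧ #B = c}
        ⟨#(Ioi e), Ioi e, fun a ha => ha, fun x hx => ⟨x, hx, le_rfl⟩, rfl⟩
      obtain ⟨S, hS, hScoi, hScard⟩ := hμmem
      have hminS : ∀ B : Set G, (∀ b ∈ B, e < b) → (∀ x, e < x → ∃ b ∈ B, b ≤ x) →
          #S ≤ #B := by
        intro B h1 h2
        rw [hScard]
        exact not_lt.1 (hμmin (#B) ⟨B, h1, h2, rfl⟩)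
      obtain ⟨S₁, hS₁, hS₁coi, hS₁card⟩ :=
        exists_coinitial_le e q hq hqe hqinj hLne hLnomax hRnomin A hA hAcof
      obtain ⟨A₁, hA₁, hA₁cof, hA₁card⟩ :=
        exists_cofinal_le e q hq hqe hqinj hRne hRnomin hLnomax S hS hScoi
      have hcardeq : #A = #S :=
        le_antisymm (le_trans (hminA A₁ hA₁ hA₁cof) hA₁card)
          (le_trans (hminS S₁ hS₁ hS₁coi) hS₁card)
      obtain ⟨r, wo, g, htype, hg1, hg2, hg3⟩ := exists_enum e A hA hAcof hLne hLnomax hminA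
      obtain ⟨r', wo', h, htype', hh1, hh2, hh3⟩ := exists_enum' e S hS hScoi hRne hRnomin hminS
      haveI := wo; haveI := wo'
      have htr : Ordinal.type r = Ordinal.type r' := by rw [htype, htype', hcardeq]
      obtain ⟨φ⟩ := Ordinal.type_eq.1 htr
      refine ⟨Set.range fun a : ↥A => Ioo (g a) (h (φ a)), ?_, ?_, ?_⟩
      · rintro U ⟨a, rfl⟩
        exact ⟨isOpen_Ioo, hg1 a, hh1 (φ a)⟩
      · rintro U ⟨a, rfl⟩ V ⟨b, rfl⟩ hne
        rcases trichotomous_of r a b with hab | heq | hba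
        · exact Or.inr (Ioo_subset_Ioo (hg2 a b hab).le (hh2 (φ a) (φ b) (φ.map_rel_iff.2 hab)).le)
        · exact absurd (by rw [heq]) hne
        · exact Or.inl (Ioo_subset_Ioo (hg2 b a hba).le (hh2 (φ b) (φ a) (φ.map_rel_iff.2 hba)).le)
      · intro U hU heU
        obtain ⟨l, u, hl, hu, hsub⟩ := getIoo (hU.mem_nhds heU) hLne hRne
        obtain ⟨a₁, hla₁⟩ := hg3 l hl
        obtain ⟨s, hsu⟩ := hh3 u hu
        rcases trichotomous_of r a₁ (φ.symm s) with h12 | heq | h21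
        · refine ⟨_, ⟨φ.symm s, rfl⟩,
            subset_trans (Ioo_subset_Ioo (le_trans hla₁ (hg2 _ _ h12).le) ?_) hsub⟩
          rw [φ.apply_symm_apply]
          exact hsu
        · refine ⟨_, ⟨a₁, rfl⟩, subset_trans (Ioo_subset_Ioo hla₁ ?_) hsub⟩
          rw [heq, φ.apply_symm_apply]
          exact hsu
        · refine ⟨_, ⟨a₁, rfl⟩, subset_trans (Ioo_subset_Ioo hla₁ ?_) hsub⟩
          refine le_trans (hh2 _ _ (φ.map_rel_iff.2 h21)).le ?_
          rw [φ.apply_symm_apply]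
          exact hsu
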